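/- Let H be a class of hypotheses ℕ → {0,1} and L a learner (a function from finite labeled samples and a query point to {0,1}). Suppose that for every h in the closure of H and every enumeration x_0, x_1, … of inputs, L predicts h correctly infinitely often on the sequence (x_t, h(x_t)). Then for every h in the closure of H there exists a finite sample S consistent with h such that the function x ↦ L(S, x) equals h; moreover such S is H-realizable. -/

import Mathlib

/-- Projection Lemma. If a learner `L` predicts every `h` in the closure of `H` correctly
infinitely often along every enumeration of inputs, then for every such `h` there is a
finite sample `S` consistent with `h` on which `L` outputs exactly `h`; moreover `S` is
`H`-realizable. -/
theorem projection_lemma (H : Set (ℕ → Bool)) (L : List (ℕ × Bool) → ℕ → Bool)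
    (hL : ∀ h ∈ closure H, ∀ x : ℕ → ℕ, ∀ N : ℕ, ∃ k ≥ N,
      L (List.ofFn fun i : Fin k => (x i, h (x i))) (x k) = h (x k)) :
    ∀ h ∈ closure H, ∃ S : List (ℕ × Bool),
      (∀ p ∈ S, h p.1 = p.2) ∧ (∀ x : ℕ, L S x = h x) ∧
      ∃ g ∈ H, ∀ p ∈ S, g p.1 = p.2 := by
  intro h hh
  -- Realizability: any sample consistent with `h` is consistent with some `g ∈ H`.
  have realiz : ∀ S : List (ℕ × Bool), (∀ p ∈ S, h p.1 = p.2) →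
      ∃ g ∈ H, ∀ p ∈ S, g p.1 = p.2 := by
    intro S hS
    set F : Set ℕ := ↑(S.map Prod.fst).toFinset with hFdef
    have hFopen : IsOpen (F.pi fun i => ({h i} : Set Bool)) :=
      isOpen_set_pi (Finset.finite_toSet _) (fun i _ => isOpen_discrete _)
    have hmem : h ∈ F.pi fun i => ({h i} : Set Bool) := by
      intro i _; rfl
    obtain ⟨g, hgU, hgH⟩ := mem_closure_iff.mp hh _ hFopen hmem
    refine ⟨g, hgH, fun p hp => ?_⟩
    have h1 : p.1 ∈ F := by
      simp only [hFdef, Finset.coe_sort_coe, Finset.mem_coe, List.mem_toFinset]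
      exact List.mem_map_of_mem (f := Prod.fst) hp
    have := hgU p.1 h1
    simp only [Set.mem_singleton_iff] at this
    rw [this, hS p hp]
  have key : ∃ S : List (ℕ × Bool), (∀ p ∈ S, h p.1 = p.2) ∧ ∀ x : ℕ, L S x = h x := by
    by_contra hc
    push_neg at hc
    choose bad hbad using hc
    -- build the adversarial enumeration
    let f : ℕ → {S : List (ℕ × Bool) // ∀ p ∈ S, h p.1 = p.2} := fun k =>
      Nat.rec ⟨[], by simp⟩
        (fun _ S => ⟨S.1 ++ [(bad S.1 S.2, h (bad S.1 S.2))],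
          by
            intro p hp
            rcases List.mem_append.mp hp with hp | hp
            · exact S.2 p hp
            · simp at hp; rw [hp]⟩) k
    let x : ℕ → ℕ := fun k => bad (f k).1 (f k).2
    have hform : ∀ k, (List.ofFn fun i : Fin k => (x i, h (x i))) = (f k).1 := by
      intro k
      induction k with
      | zero => rfl
      | succ n ih =>
        rw [List.ofFn_succ']
        show _ = (f n).1 ++ [(x n, h (x n))]
        rw [List.concat_eq_append, ← ih]
        rfl
    obtain ⟨k, _, hk⟩ := hL h hh x 0
    rw [hform k] at hk
    exact hbad (f k).1 (f k).2 hk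
  obtain ⟨S, hS1, hS2⟩ := key
  exact ⟨S, hS1, hS2, realiz S hS1⟩
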